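/- Let g be a real Banach-Lie algebra, h a closed subalgebra, V a closed complement (g = h ⊕ V), and I ∈ B(g) with h = ker I, I(V) ⊆ V, (I|_V)² = −id_V, and N(x,y) := I[Ix,y] + I[x,Iy] + [x,y] − [Ix,Iy] ∈ h for all x, y ∈ g. Extend I complex-linearly to g_ℂ and set k := h_ℂ + ker(I − i·id) ∩ V_ℂ. Then k is a closed complex subalgebra of g_ℂ satisfying k + k̄ = g_ℂ and k ∩ k̄ = h_ℂ, where k̄ denotes the image of k under the conjugation of g_ℂ fixing g. -/

import Mathlib

/-- Bilinearity expansion of the Nijenhuis-type tensor. -/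
lemma stmt12_N_bilin {gc : Type*} [NormedAddCommGroup gc] [NormedSpace ℂ gc]
    (lb : gc →L[ℂ] gc →L[ℂ] gc) (I : gc →L[ℂ] gc) (c d : ℂ) (r s r' s' : gc) :
    I (lb (I (r + c • s)) (r' + d • s')) + I (lb (r + c • s) (I (r' + d • s')))
      + lb (r + c • s) (r' + d • s') - lb (I (r + c • s)) (I (r' + d • s'))
    = (I (lb (I r) r') + I (lb r (I r')) + lb r r' - lb (I r) (I r'))
      + d • (I (lb (I r) s') + I (lb r (I s')) + lb r s' - lb (I r) (I s'))
      + c • (I (lb (I s) r') + I (lb s (I r')) + lb s r' - lb (I s) (I r'))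
      + (c * d) • (I (lb (I s) s') + I (lb s (I s')) + lb s s' - lb (I s) (I s')) := by
  simp only [map_add, map_smul, ContinuousLinearMap.add_apply,
    ContinuousLinearMap.smul_apply, smul_add, smul_sub, smul_smul]
  module

theorem stmt_12 {gc : Type*} [NormedAddCommGroup gc] [NormedSpace ℂ gc] [CompleteSpace gc]
    (σ : gc →ₗ[ℝ] gc)
    (hσ_cont : Continuous σ)
    (hσ_invol : ∀ z, σ (σ z) = z)
    (hσ_antilinear : ∀ (c : ℂ) (z : gc), σ (c • z) = (starRingEnd ℂ c) • σ z)
    (lb : gc →L[ℂ] gc →L[ℂ] gc)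
    (hlb_skew : ∀ x y : gc, lb x y = -lb y x)
    (hlb_jacobi : ∀ x y z : gc, lb x (lb y z) + lb y (lb z x) + lb z (lb x y) = 0)
    (hlbσ : ∀ x y : gc, σ (lb x y) = lb (σ x) (σ y))
    (I : gc →L[ℂ] gc)
    (hIσ : ∀ z : gc, σ (I z) = I (σ z))
    (hker_subalg : ∀ x ∈ LinearMap.ker (I : gc →ₗ[ℂ] gc), ∀ y ∈ LinearMap.ker (I : gc →ₗ[ℂ] gc), lb x y ∈ LinearMap.ker (I : gc →ₗ[ℂ] gc))
    (VC : Submodule ℂ gc)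
    (hVC_closed : IsClosed (VC : Set gc))
    (hVCσ : ∀ z ∈ VC, σ z ∈ VC)
    (hcompl : IsCompl (LinearMap.ker (I : gc →ₗ[ℂ] gc)) VC)
    (hIV : ∀ x ∈ VC, I x ∈ VC)
    (hI2 : ∀ x ∈ VC, I (I x) = -x)
    (hequiv : ∀ z ∈ LinearMap.ker (I : gc →ₗ[ℂ] gc), ∀ v ∈ VC, I (lb z v) - lb z (I v) ∈ LinearMap.ker (I : gc →ₗ[ℂ] gc))
    (htorsion : ∀ x y : gc, σ x = x → σ y = y →
      I (lb (I x) y) + I (lb x (I y)) + lb x y - lb (I x) (I y) ∈ LinearMap.ker (I : gc →ₗ[ℂ] gc)) :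
    (IsClosed ((LinearMap.ker (I : gc →ₗ[ℂ] gc) ⊔
        (LinearMap.ker ((I - Complex.I • ContinuousLinearMap.id ℂ gc : gc →L[ℂ] gc) :
              gc →ₗ[ℂ] gc) ⊓ VC) :
          Submodule ℂ gc) : Set gc))
    ∧ (∀ x ∈ (LinearMap.ker (I : gc →ₗ[ℂ] gc) ⊔
          (LinearMap.ker ((I - Complex.I • ContinuousLinearMap.id ℂ gc : gc →L[ℂ] gc) :
              gc →ₗ[ℂ] gc) ⊓ VC) :
            Submodule ℂ gc),
        ∀ y ∈ (LinearMap.ker (I : gc →ₗ[ℂ] gc) ⊔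
          (LinearMap.ker ((I - Complex.I • ContinuousLinearMap.id ℂ gc : gc →L[ℂ] gc) :
              gc →ₗ[ℂ] gc) ⊓ VC) :
            Submodule ℂ gc),
        lb x y ∈ (LinearMap.ker (I : gc →ₗ[ℂ] gc) ⊔
          (LinearMap.ker ((I - Complex.I • ContinuousLinearMap.id ℂ gc : gc →L[ℂ] gc) :
              gc →ₗ[ℂ] gc) ⊓ VC) :
            Submodule ℂ gc))
    ∧ (∀ z : gc, ∃ a b : gc,
        a ∈ (LinearMap.ker (I : gc →ₗ[ℂ] gc) ⊔
          (LinearMap.ker ((I - Complex.I • ContinuousLinearMap.id ℂ gc : gc →L[ℂ] gc) :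
              gc →ₗ[ℂ] gc) ⊓ VC) :
            Submodule ℂ gc) ∧
        b ∈ (LinearMap.ker (I : gc →ₗ[ℂ] gc) ⊔
          (LinearMap.ker ((I - Complex.I • ContinuousLinearMap.id ℂ gc : gc →L[ℂ] gc) :
              gc →ₗ[ℂ] gc) ⊓ VC) :
            Submodule ℂ gc) ∧
        z = a + σ b)
    ∧ (∀ z : gc,
        (z ∈ (LinearMap.ker (I : gc →ₗ[ℂ] gc) ⊔
            (LinearMap.ker ((I - Complex.I • ContinuousLinearMap.id ℂ gc : gc →L[ℂ] gc) :
              gc →ₗ[ℂ] gc) ⊓ VC) :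
              Submodule ℂ gc)
          ∧ σ z ∈ (LinearMap.ker (I : gc →ₗ[ℂ] gc) ⊔
            (LinearMap.ker ((I - Complex.I • ContinuousLinearMap.id ℂ gc : gc →L[ℂ] gc) :
              gc →ₗ[ℂ] gc) ⊓ VC) :
              Submodule ℂ gc))
        ↔ I z = 0) := by
  set W := (LinearMap.ker ((I - Complex.I • ContinuousLinearMap.id ℂ gc : gc →L[ℂ] gc) :
              gc →ₗ[ℂ] gc) ⊓ VC :
    Submodule ℂ gc) with hWdef
  set K := (LinearMap.ker (I : gc →ₗ[ℂ] gc) ⊔ W : Submodule ℂ gc) with hKdef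
  -- membership in W
  have hWmem : ∀ z : gc, z ∈ W ↔ (I z = Complex.I • z ∧ z ∈ VC) := by
    intro z
    rw [hWdef, Submodule.mem_inf, LinearMap.mem_ker]
    constructor
    · rintro ⟨h1, h2⟩
      refine ⟨?_, h2⟩
      have : I z - Complex.I • z = 0 := by
        simpa [ContinuousLinearMap.sub_apply, ContinuousLinearMap.smul_apply] using h1
      exact sub_eq_zero.mp this
    · rintro ⟨h1, h2⟩
      refine ⟨?_, h2⟩
      show (I - Complex.I • ContinuousLinearMap.id ℂ gc) z = 0
      simp [ContinuousLinearMap.sub_apply, ContinuousLinearMap.smul_apply, h1]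
  -- the key membership criterion
  have hcrit : ∀ z : gc, z ∈ K ↔ I (I z) = Complex.I • I z := by
    intro z
    constructor
    · intro hz
      rw [hKdef, Submodule.mem_sup] at hz
      obtain ⟨a, ha, u, hu, rfl⟩ := hz
      obtain ⟨hu1, hu2⟩ := (hWmem u).1 hu
      have ha' : I a = 0 := ha
      simp [map_add, ha', hu1, smul_smul]
    · intro hz
      have hmt : z ∈ (⊤ : Submodule ℂ gc) := trivial
      rw [← hcompl.sup_eq_top, Submodule.mem_sup] at hmt
      obtain ⟨a, ha, v, hv, rfl⟩ := hmt
      have ha' : I a = 0 := ha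
      have h1 : I (I v) = Complex.I • I v := by simpa [map_add, ha'] using hz
      have h2 : I (I v) = -v := hI2 v hv
      rw [h1] at h2
      have h3 : I v = Complex.I • v := by
        have h4 := congrArg (fun w => Complex.I • w) h2
        simp only [smul_smul, Complex.I_mul_I, neg_one_smul, smul_neg] at h4
        exact neg_injective h4
      exact Submodule.mem_sup.2 ⟨a, ha, v, (hWmem v).2 ⟨h3, hv⟩, rfl⟩
  -- real/imaginary decomposition w.r.t. σ
  have hdecomp : ∀ z : gc, ∃ r s : gc, σ r = r ∧ σ s = s ∧ z = r + Complex.I • s := by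
    intro z
    refine ⟨(2:ℂ)⁻¹ • (z + σ z), (-((2:ℂ)⁻¹ * Complex.I)) • (z - σ z), ?_, ?_, ?_⟩
    · rw [hσ_antilinear, map_add, hσ_invol,
        show (starRingEnd ℂ) ((2:ℂ)⁻¹) = (2:ℂ)⁻¹ from by simp [Complex.conj_ofNat]]
      module
    · rw [hσ_antilinear, map_sub, hσ_invol]
      have hc : (starRingEnd ℂ) (-((2:ℂ)⁻¹ * Complex.I)) = (2:ℂ)⁻¹ * Complex.I := by
        simp [Complex.conj_ofNat]
      rw [hc]
      rw [smul_sub, smul_sub]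
      module
    · rw [smul_smul]
      have hc : Complex.I * -((2:ℂ)⁻¹ * Complex.I) = (2:ℂ)⁻¹ := by
        linear_combination (-(2:ℂ)⁻¹) * Complex.I_sq
      rw [hc]
      module
  -- torsion condition for all complex vectors
  have hNgen : ∀ x y : gc,
      I (lb (I x) y) + I (lb x (I y)) + lb x y - lb (I x) (I y) ∈ LinearMap.ker (I : gc →ₗ[ℂ] gc) := by
    intro x y
    obtain ⟨rx, sx, hrx, hsx, hx⟩ := hdecomp x
    obtain ⟨ry, sy, hry, hsy, hy⟩ := hdecomp y
    rw [hx, hy, stmt12_N_bilin lb I Complex.I Complex.I rx sx ry sy]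
    refine Submodule.add_mem _ (Submodule.add_mem _ (Submodule.add_mem _ ?_ ?_) ?_) ?_
    · exact htorsion rx ry hrx hry
    · exact Submodule.smul_mem _ _ (htorsion rx sy hrx hsy)
    · exact Submodule.smul_mem _ _ (htorsion sx ry hsx hry)
    · exact Submodule.smul_mem _ _ (htorsion sx sy hsx hsy)
  -- the criterion holds for brackets of "mixed" and "pure" elements
  have hbrk_hW : ∀ a ∈ LinearMap.ker (I : gc →ₗ[ℂ] gc), ∀ w ∈ W,
      I (I (lb a w)) = Complex.I • I (lb a w) := by
    intro a ha w hw
    obtain ⟨hw1, hw2⟩ := (hWmem w).1 hw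
    have hm : I (I (lb a w) - lb a (I w)) = 0 := hequiv a ha w hw2
    rw [map_sub, sub_eq_zero] at hm
    rw [hm, hw1, map_smul, map_smul]
  have hbrk_WW : ∀ u ∈ W, ∀ w ∈ W,
      I (I (lb u w)) = Complex.I • I (lb u w) := by
    intro u hu w hw
    obtain ⟨hu1, hu2⟩ := (hWmem u).1 hu
    obtain ⟨hw1, hw2⟩ := (hWmem w).1 hw
    have hNuw : I (I (lb (I u) w) + I (lb u (I w)) + lb u w - lb (I u) (I w)) = 0 :=
      hNgen u w
    have key : (2 * Complex.I) • (I (I (lb u w)) - Complex.I • I (lb u w))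
        = I (I (lb (I u) w) + I (lb u (I w)) + lb u w - lb (I u) (I w)) := by
      rw [hu1, hw1]
      simp only [map_add, map_sub, map_smul, ContinuousLinearMap.smul_apply,
        smul_smul, smul_sub, Complex.I_mul_I, mul_assoc, mul_neg_one, neg_smul,
        one_smul, sub_neg_eq_add]
      module
    rw [hNuw] at key
    have h2I : (2 * Complex.I : ℂ) ≠ 0 := by simp [Complex.I_ne_zero]
    have := (smul_eq_zero.mp key).resolve_left h2I
    exact sub_eq_zero.mp this
  refine ⟨?_, ?_, ?_, ?_⟩
  -- (1) closedness
  · have hset : (K : Set gc) = {z : gc | I (I z) - Complex.I • I z = 0} := by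
      ext z
      simp only [SetLike.mem_coe, Set.mem_setOf_eq, hcrit z, sub_eq_zero]
    rw [hset]
    have hcont : Continuous fun z : gc => I (I z) - Complex.I • I z :=
      (I.continuous.comp I.continuous).sub (I.continuous.const_smul Complex.I)
    exact isClosed_eq hcont continuous_const
  -- (2) subalgebra
  · intro x hx y hy
    rw [hKdef, Submodule.mem_sup] at hx hy
    obtain ⟨a, ha, u, hu, rfl⟩ := hx
    obtain ⟨b, hb, w, hw, rfl⟩ := hy
    rw [hcrit]
    have e1 : I (I (lb a b)) = Complex.I • I (lb a b) := by
      have : I (lb a b) = 0 := hker_subalg a ha b hb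
      rw [this]; simp
    have e2 : I (I (lb a w)) = Complex.I • I (lb a w) := hbrk_hW a ha w hw
    have e3 : I (I (lb u b)) = Complex.I • I (lb u b) := by
      rw [hlb_skew u b]
      have := hbrk_hW b hb u hu
      simp [this]
    have e4 : I (I (lb u w)) = Complex.I • I (lb u w) := hbrk_WW u hu w hw
    have hexp : lb (a + u) (b + w) = lb a b + lb a w + lb u b + lb u w := by
      simp only [map_add, ContinuousLinearMap.add_apply]
      abel
    rw [hexp]
    simp only [map_add, e1, e2, e3, e4, smul_add]
  -- (3) K + σ K = gc
  · intro z
    have hmt : z ∈ (⊤ : Submodule ℂ gc) := trivial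
    rw [← hcompl.sup_eq_top, Submodule.mem_sup] at hmt
    obtain ⟨a, ha, v, hv, rfl⟩ := hmt
    set vp := (2:ℂ)⁻¹ • (v - Complex.I • I v) with hvp
    set vm := (2:ℂ)⁻¹ • (v + Complex.I • I v) with hvm
    have hvpV : vp ∈ VC := Submodule.smul_mem _ _
      (Submodule.sub_mem _ hv (Submodule.smul_mem _ _ (hIV v hv)))
    have hvmV : vm ∈ VC := Submodule.smul_mem _ _
      (Submodule.add_mem _ hv (Submodule.smul_mem _ _ (hIV v hv)))
    have hIvp : I vp = Complex.I • vp := by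
      rw [hvp]
      simp only [map_smul, map_sub, map_add, smul_smul, hI2 v hv, smul_sub, smul_add,
        smul_neg]
      match_scalars <;>
        first
          | ring1
          | linear_combination ((1:ℂ)/2) * Complex.I_sq
          | linear_combination (-(1:ℂ)/2) * Complex.I_sq
    have hIvm : I vm = (-Complex.I) • vm := by
      rw [hvm]
      simp only [map_smul, map_sub, map_add, smul_smul, hI2 v hv, smul_sub, smul_add,
        smul_neg, neg_smul]
      match_scalars <;>
        first
          | ring1
          | linear_combination ((1:ℂ)/2) * Complex.I_sq
          | linear_combination (-(1:ℂ)/2) * Complex.I_sq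
    have hb : σ vm ∈ W := by
      refine (hWmem (σ vm)).2 ⟨?_, hVCσ vm hvmV⟩
      rw [← hIσ, hIvm, hσ_antilinear]
      simp
    refine ⟨a + vp, σ vm, ?_, ?_, ?_⟩
    · exact Submodule.add_mem _ (Submodule.mem_sup_left ha)
        (Submodule.mem_sup_right ((hWmem vp).2 ⟨hIvp, hvpV⟩))
    · exact Submodule.mem_sup_right hb
    · rw [hσ_invol]
      rw [hvp, hvm]
      module
  -- (4) K ∩ σ K = ker I
  · intro z
    constructor
    · rintro ⟨h1, h2⟩
      rw [hcrit] at h1 h2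
      have h4 : I (I z) = -(Complex.I • I z) := by
        have h3 := congrArg σ h2
        simpa [hIσ, hσ_invol, hσ_antilinear] using h3
      rw [h1] at h4
      have h6 : (2:ℂ) • (Complex.I • I z) = 0 := by
        rw [two_smul]
        nth_rewrite 1 [h4]
        simp
      have h7 : Complex.I • I z = 0 := by
        have h2ne : (2:ℂ) ≠ 0 := two_ne_zero
        exact (smul_eq_zero.mp h6).resolve_left h2ne
      have := (smul_eq_zero.mp h7).resolve_left Complex.I_ne_zero
      exact this
    · intro h0
      constructor
      · exact Submodule.mem_sup_left (LinearMap.mem_ker.mpr h0)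
      · refine Submodule.mem_sup_left (LinearMap.mem_ker.mpr ?_)
        show I (σ z) = 0
        rw [← hIσ, h0, map_zero]
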